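/- Let p ≥ 2 and n ≥ 1 be integers with k = ⌊log_p n⌋ ≥ 1. Then the cardinality |A_{p,n}| equals, as a rational number, (1/k!) · ∑ ∏_{ℓ=1}^{k} ((n − ∑_{i=0}^{k−1} p^{i+1} j_i − ∑_{i=0}^{k} p^i ε_i)/p^{k+1} + ℓ), where the sum runs over all ε = (ε_0,…,ε_k) ∈ {0,1}^{k+1} and all tuples (j_0,…,j_{k−1}) of integers with 0 ≤ j_i ≤ p^{k−i} − 1 for 0 ≤ i ≤ k−1 such that ∑_{i=0}^{k−1} p^{i+1} j_i + ∑_{i=0}^{k} p^i ε_i ≡ n (mod p^{k+1}). (When p is a prime, |A_{p,n}| equals the total stable cohomology dimension h_st(−n,n) of the line bundle O(−n,n) on the flag variety in characteristic p.) -/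

import Mathlib

private lemma decomp (p k i : ℕ) (hi : i ≤ k) (x : ℕ) :
    x * p ^ i = p ^ i * (x % p) + p ^ (i+1) * ((x / p) % p ^ (k - i))
      + p ^ (k+1) * (x / p / p ^ (k - i)) := by
  have h3 : p ^ (i+1) * p ^ (k-i) = p ^ (k+1) := by rw [← pow_add]; congr 1; omega
  rw [← h3]
  have : p ^ i * (x % p) + p ^ (i+1) * ((x/p) % p^(k-i))
      + p^(i+1)*p^(k-i) * (x/p/p^(k-i))
      = p ^ i * (x % p + p * ((x/p) % p^(k-i) + p^(k-i) * (x/p/p^(k-i)))) := by ring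
  rw [this, Nat.mod_add_div, Nat.mod_add_div, Nat.mul_comm]

private lemma keysum (p k : ℕ) (x : Fin (k+1) → ℕ) :
    ∑ i : Fin (k+1), x i * p ^ (i:ℕ)
      = ∑ i : Fin (k+1), p^(i:ℕ) * (x i % p)
        + ∑ i : Fin (k+1), p^((i:ℕ)+1) * ((x i / p) % p ^ (k - (i:ℕ)))
        + p^(k+1) * ∑ i : Fin (k+1), (x i / p / p ^ (k - (i:ℕ))) := by
  rw [Finset.mul_sum, ← Finset.sum_add_distrib, ← Finset.sum_add_distrib]
  exact Finset.sum_congr rfl fun i _ => decomp p k i (Fin.is_le i) (x i)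

private lemma fibercard (p n k : ℕ) (hp : 2 ≤ p) (ε : Fin (k+1) → ℕ) (t : Fin k → ℕ)
    (hε : ∀ i, ε i = 0 ∨ ε i = 1) (ht : ∀ i : Fin k, t i < p ^ (k - (i:ℕ))) :
    ((Fintype.piFinset fun _ : Fin (k+1) => Finset.range (n+1)).filter
        (fun x => ((∑ i : Fin (k + 1), x i * p ^ (i : ℕ) = n)
          ∧ ∀ i, x i % p = 0 ∨ x i % p = 1)
          ∧ ((fun i : Fin (k+1) => x i % p, fun i : Fin k => (x i.castSucc / p) % p ^ (k - (i:ℕ)))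
              = (ε, t)))).card
      = ((Fintype.piFinset fun _ : Fin (k+1) => Finset.range (n+1)).filter
          (fun s => (∑ i : Fin k, p ^ ((i:ℕ)+1) * t i + ∑ i : Fin (k+1), p ^ (i:ℕ) * ε i)
            + p^(k+1) * ∑ i, s i = n)).card := by
  have hppos : 0 < p := by omega
  set t'' : Fin (k+1) → ℕ := fun i => if h : (i:ℕ) < k then t ⟨(i:ℕ), h⟩ else 0 with ht''
  have ht''lt : ∀ i : Fin (k+1), t'' i < p ^ (k - (i:ℕ)) := by
    intro i
    by_cases h : (i:ℕ) < k
    · simp only [ht'', dif_pos h]; exact ht ⟨(i:ℕ), h⟩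
    · simp only [ht'', dif_neg h]; exact Nat.pow_pos hppos
  have hεlt : ∀ i, ε i < p := fun i => by rcases hε i with h | h <;> omega
  have ht''cast : ∀ i : Fin k, t'' i.castSucc = t i := fun i => by
    simp only [ht'', Fin.coe_castSucc, dif_pos i.isLt, Fin.eta]
  have ht''sum : ∑ i : Fin (k+1), p^((i:ℕ)+1) * t'' i = ∑ i : Fin k, p^((i:ℕ)+1) * t i := by
    rw [Fin.sum_univ_castSucc]
    have hlast : t'' (Fin.last k) = 0 := by
      simp only [ht'', Fin.val_last]; rw [dif_neg (lt_irrefl k)]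
    rw [hlast]
    simp only [Fin.val_last, Nat.mul_zero, Nat.add_zero]
    exact Finset.sum_congr rfl fun i _ => by rw [ht''cast i, Fin.coe_castSucc]
  -- facts about x in the fiber
  have fiberfacts : ∀ x : Fin (k+1) → ℕ,
      ((fun i : Fin (k+1) => x i % p) = ε) → ((fun i : Fin k => (x i.castSucc / p) % p ^ (k - (i:ℕ))) = t) →
      (∀ i : Fin (k+1), x i % p = ε i) ∧ (∀ i : Fin (k+1), (x i / p) % p ^ (k - (i:ℕ)) = t'' i) := by
    intro x hx1 hx2
    refine ⟨fun i => congrFun hx1 i, fun i => ?_⟩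
    by_cases h : (i:ℕ) < k
    · have h2 := congrFun hx2 ⟨(i:ℕ), h⟩
      simp only at h2
      have hi : (⟨(i:ℕ), h⟩ : Fin k).castSucc = i := by ext; simp
      rw [hi] at h2
      simp only [ht'', dif_pos h]
      exact h2
    · have hik : (i:ℕ) < k+1 := i.isLt
      have : k - (i:ℕ) = 0 := by omega
      simp only [ht'', this, dif_neg h, pow_zero, Nat.mod_one]
  apply Finset.card_bij' (fun x _ => fun i : Fin (k+1) => x i / p / p ^ (k - (i:ℕ)))
    (fun s _ => fun i : Fin (k+1) => ε i + p * (t'' i + p ^ (k - (i:ℕ)) * s i))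
  · -- forward maps into SS
    intro x hx
    simp only [Finset.mem_filter, Fintype.mem_piFinset, Finset.mem_range, Prod.mk.injEq] at hx ⊢
    obtain ⟨hxbd, ⟨hxsum, _⟩, hx1, hx2⟩ := hx
    obtain ⟨hmod, hmid⟩ := fiberfacts x hx1 hx2
    have e1 : ∑ i : Fin (k+1), p^(i:ℕ) * (x i % p) = ∑ i : Fin (k+1), p^(i:ℕ) * ε i :=
      Finset.sum_congr rfl fun i _ => by rw [hmod i]
    have e2 : ∑ i : Fin (k+1), p^((i:ℕ)+1) * ((x i / p) % p ^ (k - (i:ℕ)))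
        = ∑ i : Fin k, p^((i:ℕ)+1) * t i := by
      rw [Finset.sum_congr rfl fun i _ => by rw [hmid i]]
      exact ht''sum
    have hk2 := keysum p k x
    rw [hxsum, e1, e2] at hk2
    constructor
    · intro i
      have h1 : x i / p / p ^ (k - (i:ℕ)) ≤ x i :=
        le_trans (Nat.div_le_self _ _) (Nat.div_le_self _ _)
      have := hxbd i
      omega
    · omega
  · -- backward maps into fiber
    intro s hs
    simp only [Finset.mem_filter, Fintype.mem_piFinset, Finset.mem_range, Prod.mk.injEq] at hs ⊢
    obtain ⟨hsbd, hssum⟩ := hs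
    have hmod : ∀ i : Fin (k+1), (ε i + p * (t'' i + p ^ (k - (i:ℕ)) * s i)) % p = ε i := by
      intro i; rw [Nat.add_mul_mod_self_left, Nat.mod_eq_of_lt (hεlt i)]
    have hdiv : ∀ i : Fin (k+1),
        (ε i + p * (t'' i + p ^ (k - (i:ℕ)) * s i)) / p = t'' i + p ^ (k - (i:ℕ)) * s i := by
      intro i; rw [Nat.add_mul_div_left _ _ hppos, Nat.div_eq_of_lt (hεlt i), Nat.zero_add]
    have hmid : ∀ i : Fin (k+1),
        ((ε i + p * (t'' i + p ^ (k - (i:ℕ)) * s i)) / p) % p ^ (k - (i:ℕ)) = t'' i := by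
      intro i; rw [hdiv i, Nat.add_mul_mod_self_left, Nat.mod_eq_of_lt (ht''lt i)]
    have hs2 : ∀ i : Fin (k+1),
        (ε i + p * (t'' i + p ^ (k - (i:ℕ)) * s i)) / p / p ^ (k - (i:ℕ)) = s i := by
      intro i
      rw [hdiv i, Nat.add_mul_div_left _ _ (Nat.pow_pos hppos),
        Nat.div_eq_of_lt (ht''lt i), Nat.zero_add]
    have hxsum : ∑ i : Fin (k+1), (ε i + p * (t'' i + p ^ (k - (i:ℕ)) * s i)) * p ^ (i:ℕ) = n := by
      have hk2 := keysum p k (fun i => ε i + p * (t'' i + p ^ (k - (i:ℕ)) * s i))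
      have e1 : ∑ i : Fin (k+1), p^(i:ℕ) * ((ε i + p * (t'' i + p ^ (k - (i:ℕ)) * s i)) % p)
          = ∑ i : Fin (k+1), p^(i:ℕ) * ε i :=
        Finset.sum_congr rfl fun i _ => by rw [hmod i]
      have e2 : ∑ i : Fin (k+1),
            p^((i:ℕ)+1) * ((ε i + p * (t'' i + p ^ (k - (i:ℕ)) * s i)) / p % p ^ (k - (i:ℕ)))
          = ∑ i : Fin k, p^((i:ℕ)+1) * t i := by
        refine Eq.trans ?_ ht''sum
        exact Finset.sum_congr rfl fun i _ => by rw [hmid i]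
      have e3 : ∑ i : Fin (k+1), (ε i + p * (t'' i + p ^ (k - (i:ℕ)) * s i)) / p / p ^ (k - (i:ℕ))
          = ∑ i : Fin (k+1), s i :=
        Finset.sum_congr rfl fun i _ => by rw [hs2 i]
      rw [e1, e2, e3] at hk2
      rw [hk2]
      omega
    refine ⟨fun i => ?_, ⟨hxsum, fun i => by rw [hmod i]; exact hε i⟩,
      funext fun i => hmod i, funext fun i => ?_⟩
    · have h1 : (ε i + p * (t'' i + p ^ (k - (i:ℕ)) * s i))
          ≤ (ε i + p * (t'' i + p ^ (k - (i:ℕ)) * s i)) * p ^ (i:ℕ) :=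
        Nat.le_mul_of_pos_right _ (Nat.pow_pos hppos)
      have h2 : (ε i + p * (t'' i + p ^ (k - (i:ℕ)) * s i)) * p ^ (i:ℕ) ≤ n := hxsum ▸
        Finset.single_le_sum
          (f := fun j : Fin (k+1) => (ε j + p * (t'' j + p ^ (k - (j:ℕ)) * s j)) * p ^ (j:ℕ))
          (fun j _ => Nat.zero_le _) (Finset.mem_univ i)
      omega
    · show ((ε i.castSucc + p * (t'' i.castSucc + p ^ (k - (i:ℕ)) * s i.castSucc)) / p)
          % p ^ (k - (i:ℕ)) = t i
      have h3 : (ε i.castSucc + p * (t'' i.castSucc + p ^ (k - (i:ℕ)) * s i.castSucc)) / p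
          % p ^ (k - (i:ℕ)) = t'' i.castSucc := hmid i.castSucc
      rw [h3]
      exact ht''cast i
  · -- left inverse
    intro x hx
    simp only [Finset.mem_filter, Fintype.mem_piFinset, Finset.mem_range, Prod.mk.injEq] at hx
    obtain ⟨hxbd, ⟨hxsum, _⟩, hx1, hx2⟩ := hx
    obtain ⟨hmod, hmid⟩ := fiberfacts x hx1 hx2
    funext i
    show ε i + p * (t'' i + p ^ (k - (i:ℕ)) * (x i / p / p ^ (k - (i:ℕ)))) = x i
    rw [← hmod i, ← hmid i, Nat.mod_add_div, Nat.mod_add_div]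
  · -- right inverse
    intro s hs
    funext i
    show (ε i + p * (t'' i + p ^ (k - (i:ℕ)) * s i)) / p / p ^ (k - (i:ℕ)) = s i
    rw [Nat.add_mul_div_left _ _ hppos, Nat.div_eq_of_lt (hεlt i), Nat.zero_add,
      Nat.add_mul_div_left _ _ (Nat.pow_pos hppos),
      Nat.div_eq_of_lt (ht''lt i), Nat.zero_add]

private lemma cardAnti (k m : ℕ) :
    (Finset.finAntidiagonal (k+1) m : Finset (Fin (k+1) → ℕ)).card = (m + k).choose k := by
  rw [← Nat.card_eq_finsetCard]
  rw [Nat.card_congr (Equiv.subtypeEquivRight (q := fun s : Fin (k+1) → ℕ => ∑ i, s i = m)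
    (fun s => by simp))]
  rw [Nat.card_congr (Sym.equivNatSumOfFintype (Fin (k+1)) m).symm]
  rw [Nat.card_eq_fintype_card, Sym.card_sym_eq_choose]
  simp only [Fintype.card_fin]
  rw [show k + 1 + m - 1 = m + k by omega]
  rw [← Nat.choose_symm (Nat.le_add_left k m)]
  congr 1
  omega

private lemma sscard (p n k : ℕ) (hp : 2 ≤ p) (S : ℕ) :
    ((Fintype.piFinset fun _ : Fin (k+1) => Finset.range (n+1)).filter
      (fun s : Fin (k+1) → ℕ => S + p^(k+1) * ∑ i, s i = n)).card
    = if S % p^(k+1) = n % p^(k+1) ∧ S ≤ n then ((n - S) / p^(k+1) + k).choose k else 0 := by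
  have hNpos : 0 < p^(k+1) := Nat.pow_pos (by omega)
  by_cases hc : S % p^(k+1) = n % p^(k+1) ∧ S ≤ n
  · obtain ⟨m, hm⟩ : p^(k+1) ∣ n - S := (Nat.modEq_iff_dvd' hc.2).mp hc.1
    have hdiv : (n - S) / p^(k+1) = m := by rw [hm]; exact Nat.mul_div_cancel_left m hNpos
    have hn' : n = S + p^(k+1) * m := by omega
    rw [if_pos hc, hdiv]
    have hSS : ((Fintype.piFinset fun _ : Fin (k+1) => Finset.range (n+1)).filter
        (fun s : Fin (k+1) → ℕ => S + p^(k+1) * ∑ i, s i = n))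
        = Finset.finAntidiagonal (k+1) m := by
      ext s
      simp only [Finset.mem_filter, Fintype.mem_piFinset, Finset.mem_range,
        Finset.mem_finAntidiagonal]
      constructor
      · rintro ⟨_, h2⟩
        have : p^(k+1) * ∑ i, s i = p^(k+1) * m := by omega
        exact Nat.eq_of_mul_eq_mul_left hNpos this
      · intro h
        refine ⟨fun i => ?_, by rw [h]; omega⟩
        have h1 : s i ≤ ∑ j, s j :=
          Finset.single_le_sum (fun j _ => Nat.zero_le _) (Finset.mem_univ i)
        have h2 : m ≤ p^(k+1) * m := Nat.le_mul_of_pos_left _ hNpos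
        omega
    rw [hSS, cardAnti]
  · rw [if_neg hc, Finset.card_eq_zero, Finset.filter_eq_empty_iff]
    intro s _
    intro hcon
    apply hc
    constructor
    · rw [← hcon, Nat.add_mul_mod_self_left]
    · omega

private lemma sbound (p n k : ℕ) (hp : 2 ≤ p) (ε : Fin (k+1) → ℕ) (t : Fin k → ℕ)
    (hε : ∀ i, ε i = 0 ∨ ε i = 1) (ht : ∀ i : Fin k, t i < p ^ (k - (i:ℕ))) :
    ∑ i : Fin k, p ^ ((i:ℕ)+1) * t i + ∑ i : Fin (k+1), p ^ (i:ℕ) * ε i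
      ≤ k * p^(k+1) + 1 := by
  have h1 : ∀ i : Fin k, p ^ ((i:ℕ)+1) * t i + p ^ ((i:ℕ)+1) ≤ p^(k+1) := by
    intro i
    have h := Nat.mul_le_mul_left (p ^ ((i:ℕ)+1)) (ht i)
    have hpow : p ^ ((i:ℕ)+1) * p ^ (k - (i:ℕ)) = p ^ (k+1) := by
      rw [← pow_add]; congr 1; have := i.isLt; omega
    rw [hpow] at h
    have := Nat.mul_succ (p ^ ((i:ℕ)+1)) (t i)
    omega
  have h2 : ∑ i : Fin k, (p ^ ((i:ℕ)+1) * t i + p ^ ((i:ℕ)+1)) ≤ ∑ _i : Fin k, p^(k+1) :=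
    Finset.sum_le_sum fun i _ => h1 i
  rw [Finset.sum_add_distrib, Finset.sum_const, Finset.card_univ, Fintype.card_fin,
    smul_eq_mul] at h2
  have h3 : ∑ i : Fin (k+1), p ^ (i:ℕ) * ε i ≤ ∑ i : Fin (k+1), p ^ (i:ℕ) :=
    Finset.sum_le_sum fun i _ => by
      rcases hε i with h | h
      · simp [h]
      · simp [h]
  have h4 : ∑ i : Fin (k+1), p ^ (i:ℕ) = 1 + ∑ i : Fin k, p ^ ((i:ℕ)+1) := by
    rw [Fin.sum_univ_succ]
    simp only [Fin.val_succ, Fin.val_zero, pow_zero]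
  omega

private lemma countA (p n k : ℕ) (hp : 2 ≤ p) :
    Set.ncard {x : Fin (k + 1) → ℕ |
        (∑ i : Fin (k + 1), x i * p ^ (i : ℕ) = n)
        ∧ ∀ i, x i % p = 0 ∨ x i % p = 1}
    = ∑ ε ∈ Fintype.piFinset (fun _ : Fin (k + 1) => ({0, 1} : Finset ℕ)),
        ∑ t ∈ Fintype.piFinset (fun i : Fin k => Finset.range (p ^ (k - (i : ℕ)))),
          if (∑ i : Fin k, p ^ ((i:ℕ)+1) * t i + ∑ i : Fin (k+1), p ^ (i:ℕ) * ε i) % p^(k+1)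
                = n % p^(k+1)
              ∧ (∑ i : Fin k, p ^ ((i:ℕ)+1) * t i + ∑ i : Fin (k+1), p ^ (i:ℕ) * ε i) ≤ n
          then ((n - (∑ i : Fin k, p ^ ((i:ℕ)+1) * t i + ∑ i : Fin (k+1), p ^ (i:ℕ) * ε i))
                / p^(k+1) + k).choose k
          else 0 := by
  have hppos : 0 < p := by omega
  have hset : {x : Fin (k + 1) → ℕ |
        (∑ i : Fin (k + 1), x i * p ^ (i : ℕ) = n)
        ∧ ∀ i, x i % p = 0 ∨ x i % p = 1}
      = ↑((Fintype.piFinset fun _ : Fin (k+1) => Finset.range (n+1)).filter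
          (fun x => (∑ i : Fin (k + 1), x i * p ^ (i : ℕ) = n)
            ∧ ∀ i, x i % p = 0 ∨ x i % p = 1)) := by
    ext x
    simp only [Set.mem_setOf_eq, Finset.coe_filter, Fintype.mem_piFinset, Finset.mem_range,
      Set.mem_setOf_eq]
    constructor
    · intro h
      refine ⟨fun i => ?_, h⟩
      have h1 : x i ≤ x i * p ^ (i:ℕ) := Nat.le_mul_of_pos_right _ (Nat.pow_pos hppos)
      have h2 : x i * p ^ (i:ℕ) ≤ n := h.1 ▸ Finset.single_le_sum
        (f := fun j : Fin (k+1) => x j * p ^ (j:ℕ)) (fun j _ => Nat.zero_le _) (Finset.mem_univ i)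
      omega
    · rintro ⟨_, h⟩; exact h
  rw [hset, Set.ncard_coe_finset]
  rw [Finset.card_eq_sum_card_fiberwise
    (f := fun x : Fin (k+1) → ℕ => ((fun i : Fin (k+1) => x i % p),
      (fun i : Fin k => (x i.castSucc / p) % p ^ (k - (i:ℕ)))))
    (t := (Fintype.piFinset (fun _ : Fin (k+1) => ({0,1}:Finset ℕ)))
        ×ˢ (Fintype.piFinset (fun i : Fin k => Finset.range (p ^ (k - (i:ℕ))))))
    (by
      intro x hx
      simp only [Finset.mem_coe, Finset.mem_filter, Fintype.mem_piFinset, Finset.mem_range] at hx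
      simp only [Finset.mem_coe, Finset.mem_product, Fintype.mem_piFinset, Finset.mem_range, Finset.mem_insert,
        Finset.mem_singleton]
      exact ⟨fun i => hx.2.2 i, fun i => Nat.mod_lt _ (Nat.pow_pos hppos)⟩)]
  rw [Finset.sum_product]
  refine Finset.sum_congr rfl fun ε hε => Finset.sum_congr rfl fun t ht => ?_
  simp only [Fintype.mem_piFinset, Finset.mem_insert, Finset.mem_singleton] at hε
  simp only [Fintype.mem_piFinset, Finset.mem_range] at ht
  rw [Finset.filter_filter]
  rw [fibercard p n k hp ε t hε ht, sscard p n k hp _]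

private lemma prodIcc (m : ℕ) : ∀ k : ℕ, ∏ ℓ ∈ Finset.Icc 1 k, ((m : ℚ) + ℓ)
    = (Nat.factorial k : ℚ) * ((m + k).choose k : ℚ) := by
  intro k
  induction k with
  | zero => simp
  | succ k ih =>
    rw [Finset.prod_Icc_succ_top (Nat.le_add_left 1 k), ih]
    have h := Nat.add_one_mul_choose_eq (m + k) k
    have h' : ((m + k + 1) * (m + k).choose k : ℚ) = ((m + k + 1).choose (k + 1) * (k + 1) : ℚ) := by
      exact_mod_cast congrArg (Nat.cast : ℕ → ℚ) h
    rw [show m + (k + 1) = m + k + 1 by ring, Nat.factorial_succ]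
    push_cast at h' ⊢
    nlinarith [h']

private lemma qterm (p n k : ℕ) (hp : 2 ≤ p) (hn : 1 ≤ n) (ε : Fin (k+1) → ℕ) (t : Fin k → ℕ)
    (hε : ∀ i, ε i = 0 ∨ ε i = 1) (ht : ∀ i : Fin k, t i < p ^ (k - (i:ℕ)))
    (hcong : (∑ i : Fin k, p ^ ((i:ℕ)+1) * t i + ∑ i : Fin (k+1), p ^ (i:ℕ) * ε i) % p^(k+1)
      = n % p^(k+1)) :
    ∏ ℓ ∈ Finset.Icc 1 k,
      (((n : ℚ) - ∑ i : Fin k, (p : ℚ) ^ ((i : ℕ) + 1) * (t i : ℚ)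
          - ∑ i : Fin (k + 1), (p : ℚ) ^ (i : ℕ) * (ε i : ℚ)) / (p : ℚ) ^ (k + 1) + (ℓ : ℚ))
    = (Nat.factorial k : ℚ) *
      ((if (∑ i : Fin k, p ^ ((i:ℕ)+1) * t i + ∑ i : Fin (k+1), p ^ (i:ℕ) * ε i) % p^(k+1)
              = n % p^(k+1)
            ∧ (∑ i : Fin k, p ^ ((i:ℕ)+1) * t i + ∑ i : Fin (k+1), p ^ (i:ℕ) * ε i) ≤ n
        then ((n - (∑ i : Fin k, p ^ ((i:ℕ)+1) * t i + ∑ i : Fin (k+1), p ^ (i:ℕ) * ε i))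
              / p^(k+1) + k).choose k
        else 0 : ℕ) : ℚ) := by
  set S : ℕ := ∑ i : Fin k, p ^ ((i:ℕ)+1) * t i + ∑ i : Fin (k+1), p ^ (i:ℕ) * ε i with hS
  have hNpos : 0 < p^(k+1) := Nat.pow_pos (by omega)
  have hNq : ((p:ℚ))^(k+1) ≠ 0 := by positivity
  have hcast : (n : ℚ) - ∑ i : Fin k, (p : ℚ) ^ ((i : ℕ) + 1) * (t i : ℚ)
      - ∑ i : Fin (k + 1), (p : ℚ) ^ (i : ℕ) * (ε i : ℚ) = (n : ℚ) - (S : ℚ) := by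
    rw [hS]
    push_cast
    ring
  have hprod : ∏ ℓ ∈ Finset.Icc 1 k,
      (((n : ℚ) - ∑ i : Fin k, (p : ℚ) ^ ((i : ℕ) + 1) * (t i : ℚ)
          - ∑ i : Fin (k + 1), (p : ℚ) ^ (i : ℕ) * (ε i : ℚ)) / (p : ℚ) ^ (k + 1) + (ℓ : ℚ))
      = ∏ ℓ ∈ Finset.Icc 1 k, (((n : ℚ) - (S:ℚ)) / (p : ℚ) ^ (k + 1) + (ℓ : ℚ)) :=
    Finset.prod_congr rfl fun ℓ _ => by rw [hcast]
  rw [hprod]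
  by_cases hle : S ≤ n
  · obtain ⟨m, hm⟩ : p^(k+1) ∣ n - S := (Nat.modEq_iff_dvd' hle).mp hcong
    have hdiv : (n - S) / p^(k+1) = m := by rw [hm]; exact Nat.mul_div_cancel_left m hNpos
    have hq : ((n : ℚ) - (S:ℚ)) / (p : ℚ) ^ (k + 1) = (m : ℚ) := by
      have h1 : (n : ℚ) - (S:ℚ) = ((n - S : ℕ) : ℚ) := by
        rw [Nat.cast_sub hle]
      rw [h1, hm]
      push_cast
      field_simp
    rw [if_pos ⟨hcong, hle⟩, hdiv]
    rw [Finset.prod_congr rfl fun ℓ _ => by rw [hq]]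
    exact prodIcc m k
  · obtain ⟨m, hm⟩ : p^(k+1) ∣ S - n :=
      (Nat.modEq_iff_dvd' (by omega)).mp hcong.symm
    have hm1 : 1 ≤ m := by
      rcases Nat.eq_zero_or_pos m with h | h
      · exfalso; rw [h, Nat.mul_zero] at hm; omega
      · exact h
    have hmk : m ≤ k := by
      have hb := sbound p n k hp ε t hε ht
      rw [← hS] at hb
      have h2 : p^(k+1) * m ≤ k * p^(k+1) := by omega
      rw [Nat.mul_comm k] at h2
      exact Nat.le_of_mul_le_mul_left h2 hNpos
    have hq : ((n : ℚ) - (S:ℚ)) / (p : ℚ) ^ (k + 1) = -(m : ℚ) := by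
      have h1 : (S : ℚ) - (n:ℚ) = ((S - n : ℕ) : ℚ) := by
        rw [Nat.cast_sub (by omega)]
      have h2 : (n : ℚ) - (S:ℚ) = -((p:ℚ)^(k+1) * m) := by
        rw [show (n:ℚ) - (S:ℚ) = -((S:ℚ) - (n:ℚ)) by ring, h1, hm]
        push_cast
        ring
      rw [h2]
      field_simp
    rw [if_neg (by tauto), Finset.prod_eq_zero (Finset.mem_Icc.mpr ⟨hm1, hmk⟩)
      (by rw [hq]; ring)]
    simp


/-- With `k = ⌊log_p n⌋ ≥ 1`, the cardinality of `A_{p,n}` (tuples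
`(a_0,…,a_k)` of nonnegative integers with `∑ a_i p^i = n` and
`a_i ≡ 0,1 (mod p)`) equals
`(1/k!) ∑ ∏_{ℓ=1}^{k} ((n - ∑_{i=0}^{k-1} p^{i+1} j_i - ∑_{i=0}^k p^i ε_i)/p^{k+1} + ℓ)`,
the sum over `ε ∈ {0,1}^{k+1}` and `0 ≤ j_i ≤ p^{k-i} - 1` with
`∑ p^{i+1} j_i + ∑ p^i ε_i ≡ n (mod p^{k+1})`.
(For `p` prime this is the total stable cohomology dimension `h_st(-n,n)`.) -/
theorem stmt_12 (p n k : ℕ) (hp : 2 ≤ p) (hn : 1 ≤ n)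
    (hk : k = Nat.log p n) (hk1 : 1 ≤ k) :
    (Set.ncard {x : Fin (k + 1) → ℕ |
        (∑ i : Fin (k + 1), x i * p ^ (i : ℕ) = n)
        ∧ ∀ i, x i % p = 0 ∨ x i % p = 1} : ℚ) =
      (1 / (Nat.factorial k : ℚ)) *
        ∑ ε ∈ Fintype.piFinset (fun _ : Fin (k + 1) => ({0, 1} : Finset ℕ)),
          ∑ t ∈ (Fintype.piFinset fun i : Fin k => Finset.range (p ^ (k - (i : ℕ)))).filter
              (fun t => (∑ i : Fin k, p ^ ((i : ℕ) + 1) * t i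
                  + ∑ i : Fin (k + 1), p ^ (i : ℕ) * ε i) % p ^ (k + 1) = n % p ^ (k + 1)),
            ∏ ℓ ∈ Finset.Icc 1 k,
              (((n : ℚ) - ∑ i : Fin k, (p : ℚ) ^ ((i : ℕ) + 1) * (t i : ℚ)
                  - ∑ i : Fin (k + 1), (p : ℚ) ^ (i : ℕ) * (ε i : ℚ)) / (p : ℚ) ^ (k + 1)
                + (ℓ : ℚ)) := by
  have hfact : (Nat.factorial k : ℚ) ≠ 0 := Nat.cast_ne_zero.mpr (Nat.factorial_ne_zero k)
  rw [countA p n k hp]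
  have hR : ∀ ε ∈ Fintype.piFinset (fun _ : Fin (k + 1) => ({0, 1} : Finset ℕ)),
      (∑ t ∈ (Fintype.piFinset fun i : Fin k => Finset.range (p ^ (k - (i : ℕ)))).filter
          (fun t => (∑ i : Fin k, p ^ ((i : ℕ) + 1) * t i
              + ∑ i : Fin (k + 1), p ^ (i : ℕ) * ε i) % p ^ (k + 1) = n % p ^ (k + 1)),
        ∏ ℓ ∈ Finset.Icc 1 k,
          (((n : ℚ) - ∑ i : Fin k, (p : ℚ) ^ ((i : ℕ) + 1) * (t i : ℚ)
              - ∑ i : Fin (k + 1), (p : ℚ) ^ (i : ℕ) * (ε i : ℚ)) / (p : ℚ) ^ (k + 1)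
            + (ℓ : ℚ)))
      = (Nat.factorial k : ℚ) *
          ∑ t ∈ Fintype.piFinset (fun i : Fin k => Finset.range (p ^ (k - (i : ℕ)))),
            ((if (∑ i : Fin k, p ^ ((i:ℕ)+1) * t i + ∑ i : Fin (k+1), p ^ (i:ℕ) * ε i) % p^(k+1)
                    = n % p^(k+1)
                  ∧ (∑ i : Fin k, p ^ ((i:ℕ)+1) * t i + ∑ i : Fin (k+1), p ^ (i:ℕ) * ε i) ≤ n
              then ((n - (∑ i : Fin k, p ^ ((i:ℕ)+1) * t i + ∑ i : Fin (k+1), p ^ (i:ℕ) * ε i))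
                    / p^(k+1) + k).choose k
              else 0 : ℕ) : ℚ) := by
    intro ε hε
    have hεp : ∀ i, ε i = 0 ∨ ε i = 1 := by
      intro i
      have := Fintype.mem_piFinset.mp hε i
      simpa using this
    rw [Finset.sum_congr rfl (fun t htf => by
      simp only [Finset.mem_filter, Fintype.mem_piFinset, Finset.mem_range] at htf
      exact qterm p n k hp hn ε t hεp (fun i => htf.1 i) htf.2)]
    rw [← Finset.mul_sum]
    congr 1
    rw [Finset.sum_filter]
    refine Finset.sum_congr rfl fun t _ => ?_
    by_cases hcg : (∑ i : Fin k, p ^ ((i:ℕ)+1) * t i + ∑ i : Fin (k+1), p ^ (i:ℕ) * ε i) % p^(k+1)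
        = n % p^(k+1)
    · rw [if_pos hcg]
    · rw [if_neg hcg, if_neg (fun hc => hcg hc.1), Nat.cast_zero]
  rw [Finset.sum_congr rfl hR, ← Finset.mul_sum, ← mul_assoc, one_div_mul_cancel hfact, one_mul,
    Nat.cast_sum]
  exact Finset.sum_congr rfl fun ε _ => Nat.cast_sum _ _
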